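/- Let m ≥ 1, and let a₁,…,a_m ≥ 0 with s := a₁ + ⋯ + a_m ≥ 1, and suppose a_i ≥ (s-1)/m for all i. Then for all x₁,…,x_m ≥ 0 (with convention 0^0 = 1), ∑_{σ ∈ S_m} x_{σ(1)}^{a₁} ⋯ x_{σ(m)}^{a_m} ≤ m! · m^{-s} · (x₁ + ⋯ + x_m)^s. -/

import Mathlib

private lemma rpow_add_nonneg' {u c d : ℝ} (hu : 0 ≤ u) (hc : 0 ≤ c) (hd : 0 ≤ d) :
    u ^ (c + d) = u ^ c * u ^ d := by
  rcases hc.eq_or_lt with rfl | hc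
  · simp
  · exact Real.rpow_add' hu (by positivity)

private lemma sum_perm_apply {n : ℕ} (x : Fin (n + 1) → ℝ) (i : Fin (n + 1)) :
    ∑ σ : Equiv.Perm (Fin (n + 1)), x (σ i) = (Nat.factorial n : ℝ) * ∑ j, x j := by
  have h1 : ∑ σ : Equiv.Perm (Fin (n + 1)), x (σ i)
      = ∑ σ : Equiv.Perm (Fin (n + 1)), x (σ 0) := by
    refine Fintype.sum_equiv (Equiv.mulRight (Equiv.swap 0 i)) _ _ fun σ => ?_
    simp [Equiv.Perm.mul_apply]
  have h2 : ∑ σ : Equiv.Perm (Fin (n + 1)), x (σ 0)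
      = ∑ p : Fin (n + 1) × Equiv.Perm (Fin n), x (Equiv.Perm.decomposeFin.symm p 0) :=
    (Fintype.sum_equiv Equiv.Perm.decomposeFin.symm _ _ fun p => rfl).symm
  rw [h1, h2]
  have h3 : ∀ p : Fin (n + 1) × Equiv.Perm (Fin n),
      x (Equiv.Perm.decomposeFin.symm p 0) = x p.1 := fun p =>
    congrArg x (Equiv.Perm.decomposeFin_symm_apply_zero p.1 p.2)
  rw [Finset.sum_congr rfl fun p _ => h3 p, Fintype.sum_prod_type]
  simp [Finset.sum_const, Fintype.card_perm, Fintype.card_fin, mul_comm, Finset.mul_sum]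

theorem muirhead_K_balanced (m : ℕ) (hm : 1 ≤ m) (a x : Fin m → ℝ)
    (ha : ∀ i, 0 ≤ a i) (hs : 1 ≤ ∑ i, a i)
    (hbal : ∀ i, (∑ j, a j - 1) / m ≤ a i)
    (hx : ∀ i, 0 ≤ x i) :
    ∑ σ : Equiv.Perm (Fin m), ∏ i, (x (σ i)) ^ (a i)
      ≤ (Nat.factorial m : ℝ) * (m : ℝ) ^ (-(∑ i, a i)) * (∑ i, x i) ^ (∑ i, a i) := by
  obtain ⟨n, rfl⟩ : ∃ n, m = n + 1 := ⟨m - 1, (Nat.succ_pred_eq_of_pos hm).symm⟩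
  set s : ℝ := ∑ i, a i with hsdef
  set t : ℝ := ∑ i, x i with htdef
  have hm' : (0:ℝ) < ((n + 1 : ℕ) : ℝ) := by positivity
  have hs1 : (1:ℝ) ≤ s := hs
  have ht : 0 ≤ t := Finset.sum_nonneg fun i _ => hx i
  set e : ℝ := (s - 1) / ((n + 1 : ℕ) : ℝ) with hedef
  have he : 0 ≤ e := div_nonneg (by linarith) hm'.le
  set b : Fin (n + 1) → ℝ := fun i => a i - e with hbdef
  have hb : ∀ i, 0 ≤ b i := fun i => sub_nonneg.2 (hbal i)
  have hab : ∀ i, a i = e + b i := fun i => by simp [hbdef]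
  have hbs : ∑ i, b i = 1 := by
    have h1 : ∑ i, b i = s - ((n + 1 : ℕ) : ℝ) * e := by
      simp [hbdef, Finset.sum_sub_distrib, mul_comm]
      rfl
    rw [h1, hedef]
    field_simp
    ring
  set P : ℝ := ∏ j, x j with hPdef
  have hP : 0 ≤ P := Finset.prod_nonneg fun i _ => hx i
  have hsplit : ∀ σ : Equiv.Perm (Fin (n + 1)),
      ∏ i, x (σ i) ^ a i = P ^ e * ∏ i, x (σ i) ^ b i := by
    intro σ
    have h1 : ∀ i, x (σ i) ^ a i = x (σ i) ^ e * x (σ i) ^ b i := fun i => by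
      rw [hab i]; exact rpow_add_nonneg' (hx _) he (hb i)
    rw [Finset.prod_congr rfl fun i _ => h1 i, Finset.prod_mul_distrib,
      Real.finset_prod_rpow _ _ (fun i _ => hx _), Equiv.prod_comp σ x]
  have hamgm : ∀ σ : Equiv.Perm (Fin (n + 1)),
      ∏ i, x (σ i) ^ b i ≤ ∑ i, b i * x (σ i) := fun σ =>
    Real.geom_mean_le_arith_mean_weighted _ b (fun i => x (σ i))
      (fun i _ => hb i) hbs (fun i _ => hx _)
  have step1 : ∑ σ : Equiv.Perm (Fin (n + 1)), ∏ i, x (σ i) ^ a i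
      ≤ P ^ e * ((Nat.factorial n : ℝ) * t) := by
    calc ∑ σ : Equiv.Perm (Fin (n + 1)), ∏ i, x (σ i) ^ a i
        = ∑ σ : Equiv.Perm (Fin (n + 1)), P ^ e * ∏ i, x (σ i) ^ b i :=
          Finset.sum_congr rfl fun σ _ => hsplit σ
      _ ≤ ∑ σ : Equiv.Perm (Fin (n + 1)), P ^ e * ∑ i, b i * x (σ i) :=
          Finset.sum_le_sum fun σ _ =>
            mul_le_mul_of_nonneg_left (hamgm σ) (Real.rpow_nonneg hP e)
      _ = P ^ e * ∑ σ : Equiv.Perm (Fin (n + 1)), ∑ i, b i * x (σ i) := by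
          rw [Finset.mul_sum]
      _ = P ^ e * ((Nat.factorial n : ℝ) * t) := by
          congr 1
          rw [Finset.sum_comm]
          have h2 : ∀ i : Fin (n + 1), ∑ σ : Equiv.Perm (Fin (n + 1)), b i * x (σ i)
              = b i * ((Nat.factorial n : ℝ) * t) := fun i => by
            rw [← Finset.mul_sum, sum_perm_apply x i]
          rw [Finset.sum_congr rfl fun i _ => h2 i, ← Finset.sum_mul, hbs, one_mul]
  have hPe : P ^ e ≤ (t / ((n + 1 : ℕ) : ℝ)) ^ (s - 1) := by
    have hw : ∑ _i : Fin (n + 1), (1:ℝ) / ((n + 1 : ℕ) : ℝ) = 1 := by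
      rw [Finset.sum_const, Finset.card_univ, Fintype.card_fin, nsmul_eq_mul]
      field_simp
    have hgm : P ^ ((1:ℝ) / ((n + 1 : ℕ) : ℝ)) ≤ t / ((n + 1 : ℕ) : ℝ) := by
      have h := Real.geom_mean_le_arith_mean_weighted Finset.univ
        (fun _ => (1:ℝ) / ((n + 1 : ℕ) : ℝ)) x (fun i _ => by positivity) hw (fun i _ => hx i)
      rw [Real.finset_prod_rpow _ _ (fun i _ => hx i)] at h
      calc P ^ ((1:ℝ) / ((n + 1 : ℕ) : ℝ)) ≤ ∑ i, (1:ℝ) / ((n + 1 : ℕ) : ℝ) * x i := h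
        _ = t / ((n + 1 : ℕ) : ℝ) := by rw [← Finset.mul_sum, ← htdef]; ring
    have h3 : P ^ e = (P ^ ((1:ℝ) / ((n + 1 : ℕ) : ℝ))) ^ (s - 1) := by
      rw [← Real.rpow_mul hP]
      congr 1
      rw [hedef]; ring
    rw [h3]
    exact Real.rpow_le_rpow (Real.rpow_nonneg hP _) hgm (by linarith)
  have hfin : (t / ((n + 1 : ℕ) : ℝ)) ^ (s - 1) * ((Nat.factorial n : ℝ) * t)
      = (Nat.factorial (n + 1) : ℝ) * ((n + 1 : ℕ) : ℝ) ^ (-s) * t ^ s := by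
    have h1 : (0:ℝ) < ((n + 1 : ℕ) : ℝ) ^ (s - 1) := Real.rpow_pos_of_pos hm' _
    have hpow : ((n + 1 : ℕ) : ℝ) ^ s = ((n + 1 : ℕ) : ℝ) ^ (s - 1) * ((n + 1 : ℕ) : ℝ) := by
      have h := Real.rpow_add hm' (s - 1) 1
      rw [sub_add_cancel, Real.rpow_one] at h
      exact h
    have hms : ((n + 1 : ℕ) : ℝ) ^ (-s) = 1 / (((n + 1 : ℕ) : ℝ) ^ (s - 1) * ((n + 1 : ℕ) : ℝ)) := by
      rw [Real.rpow_neg hm'.le, ← hpow, inv_eq_one_div]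
    have hts : t ^ s = t ^ (s - 1) * t := by
      have h := Real.rpow_add' ht (y := s - 1) (z := 1) (ne_of_gt (by linarith))
      rw [sub_add_cancel, Real.rpow_one] at h
      exact h
    have hfac : ((Nat.factorial (n + 1) : ℕ) : ℝ)
        = ((n + 1 : ℕ) : ℝ) * (Nat.factorial n : ℝ) := by
      rw [Nat.factorial_succ]; push_cast; ring
    rw [Real.div_rpow ht hm'.le, hms, hts, hfac]
    field_simp
  calc ∑ σ : Equiv.Perm (Fin (n + 1)), ∏ i, x (σ i) ^ a i
      ≤ P ^ e * ((Nat.factorial n : ℝ) * t) := step1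
    _ ≤ (t / ((n + 1 : ℕ) : ℝ)) ^ (s - 1) * ((Nat.factorial n : ℝ) * t) := by
        apply mul_le_mul_of_nonneg_right hPe
        positivity
    _ = (Nat.factorial (n + 1) : ℝ) * ((n + 1 : ℕ) : ℝ) ^ (-s) * t ^ s := hfin
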